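/- For every n ∈ ℕ there exists a positive constant C (depending only on n) such that the following holds: for every real Hilbert space H, every bounded nonnegative selfadjoint operator A : H →L[ℝ] H, and every solution u of u'' + A u + u' = 0 with data (u0,u1), the n-th time derivative u⁽ⁿ⁾ satisfies ‖u⁽ⁿ⁾(t)‖² + (1+t) E(u⁽ⁿ⁾;t) ≤ C (1+t)^{−2n} ‖(u0,u1)‖_{D(Lⁿ)}² for all t ≥ 0. -/

import Mathlib

open scoped RealInnerProductSpace
open Set

universe u

set_option linter.unusedSectionVars false
set_option maxHeartbeats 1000000

namespace Stmt6

variable {H : Type u} [NormedAddCommGroup H] [InnerProductSpace ℝ H]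

def Lc (A : H →L[ℝ] H) : H × H →L[ℝ] H × H :=
  (ContinuousLinearMap.snd ℝ H H).prod
    (-(A.comp (ContinuousLinearMap.fst ℝ H H)) - ContinuousLinearMap.snd ℝ H H)

@[simp] lemma Lc_apply (A : H →L[ℝ] H) (x : H × H) : Lc A x = (x.2, -A x.1 - x.2) := rfl

lemma Lc_iterate_eq (A : H →L[ℝ] H) (k : ℕ) (x : H × H) :
    (Lc A)^[k] x = (fun p : H × H => (p.2, -A p.1 - p.2))^[k] x := by
  induction k with
  | zero => rfl
  | succ k ih => rw [Function.iterate_succ_apply', Function.iterate_succ_apply', ih]; rfl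

lemma comb_nonneg (x y : H) (a : ℝ) : 0 ≤ ⟪x, x⟫ + 2 * a * ⟪x, y⟫ + a ^ 2 * ⟪y, y⟫ := by
  have h : ⟪x + a • y, x + a • y⟫ = ⟪x, x⟫ + 2 * a * ⟪x, y⟫ + a ^ 2 * ⟪y, y⟫ := by
    simp only [inner_add_left, inner_add_right, real_inner_smul_left, real_inner_smul_right,
      real_inner_comm y x]
    ring
  have h2 := real_inner_self_nonneg (x := x + a • y)
  linarith [h.le, h.symm.le]

lemma antitone_of {F F' : ℝ → ℝ} (hd : ∀ t ∈ Ici (0:ℝ), HasDerivAt F (F' t) t)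
    (h0 : ∀ t ∈ Ioi (0:ℝ), F' t ≤ 0) {t : ℝ} (ht : 0 ≤ t) : F t ≤ F 0 := by
  have h1 : ContinuousOn F (Ici 0) := fun x hx => (hd x hx).continuousAt.continuousWithinAt
  have h2 : DifferentiableOn ℝ F (interior (Ici (0:ℝ))) := by
    rw [interior_Ici]
    exact fun x hx => ((hd x (mem_Ici.mpr (le_of_lt (mem_Ioi.mp hx)))).differentiableAt).differentiableWithinAt
  have h3 : ∀ x ∈ interior (Ici (0:ℝ)), deriv F x ≤ 0 := by
    rw [interior_Ici]
    intro x hx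
    rw [(hd x (mem_Ici.mpr (le_of_lt (mem_Ioi.mp hx)))).deriv]
    exact h0 x hx
  exact antitoneOn_of_deriv_nonpos (convex_Ici 0) h1 h2 h3 self_mem_Ici (mem_Ici.mpr ht) ht


section Core

variable [CompleteSpace H] {A : H →L[ℝ] H} {W : ℝ → H × H}

lemma hsym (hA : IsSelfAdjoint A) (x y : H) : ⟪A x, y⟫ = ⟪A y, x⟫ := by
  have h1 : ⟪A x, y⟫ = ⟪x, A y⟫ := by
    conv_lhs => rw [← hA.adjoint_eq]
    exact ContinuousLinearMap.adjoint_inner_left A y x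
  rw [h1, real_inner_comm]

noncomputable def PP (W : ℝ → H × H) : ℝ → ℝ := fun s => ⟪(W s).2, (W s).2⟫
noncomputable def QQ (A : H →L[ℝ] H) (W : ℝ → H × H) : ℝ → ℝ := fun s => ⟪A (W s).1, (W s).1⟫
noncomputable def MM (W : ℝ → H × H) : ℝ → ℝ := fun s => ⟪(W s).1, (W s).1⟫
noncomputable def RR (W : ℝ → H × H) : ℝ → ℝ := fun s => ⟪(W s).1, (W s).2⟫
noncomputable def PP1 (A : H →L[ℝ] H) (W : ℝ → H × H) : ℝ → ℝ :=
  fun s => ⟪(Lc A (W s)).2, (Lc A (W s)).2⟫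
noncomputable def QQ1 (A : H →L[ℝ] H) (W : ℝ → H × H) : ℝ → ℝ := fun s => ⟪A (W s).2, (W s).2⟫
noncomputable def RR1 (A : H →L[ℝ] H) (W : ℝ → H × H) : ℝ → ℝ :=
  fun s => ⟪(W s).2, (Lc A (W s)).2⟫
noncomputable def CC (A : H →L[ℝ] H) (W : ℝ → H × H) : ℝ → ℝ := fun s => ⟪A (W s).1, (W s).2⟫
noncomputable def CC1 (A : H →L[ℝ] H) (W : ℝ → H × H) : ℝ → ℝ :=
  fun s => ⟪A (W s).2, (Lc A (W s)).2⟫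

lemma hd0 (hW : ∀ τ ∈ Ici (0:ℝ), HasDerivAt W (Lc A (W τ)) τ) (t : ℝ) (ht : t ∈ Ici (0:ℝ)) : HasDerivAt (fun s => (W s).1) ((W t).2) t := by
  have h := (ContinuousLinearMap.fst ℝ H H).hasFDerivAt.comp_hasDerivAt t (hW t ht)
  simpa [Function.comp_def] using h

lemma hd1 (hW : ∀ τ ∈ Ici (0:ℝ), HasDerivAt W (Lc A (W τ)) τ) (t : ℝ) (ht : t ∈ Ici (0:ℝ)) :
    HasDerivAt (fun s => (W s).2) ((Lc A (W t)).2) t := by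
  have h := (ContinuousLinearMap.snd ℝ H H).hasFDerivAt.comp_hasDerivAt t (hW t ht)
  simpa [Function.comp_def] using h

lemma hd2 (hW : ∀ τ ∈ Ici (0:ℝ), HasDerivAt W (Lc A (W τ)) τ) (t : ℝ) (ht : t ∈ Ici (0:ℝ)) :
    HasDerivAt (fun s => (Lc A (W s)).2) ((Lc A (Lc A (W t))).2) t := by
  have h0 := (Lc A).hasFDerivAt.comp_hasDerivAt t (hW t ht)
  have h := (ContinuousLinearMap.snd ℝ H H).hasFDerivAt.comp_hasDerivAt t h0
  simpa [Function.comp_def] using h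

lemma hdA0 (hW : ∀ τ ∈ Ici (0:ℝ), HasDerivAt W (Lc A (W τ)) τ) (t : ℝ) (ht : t ∈ Ici (0:ℝ)) :
    HasDerivAt (fun s => A ((W s).1)) (A ((W t).2)) t := by
  have h := A.hasFDerivAt.comp_hasDerivAt t (hd0 hW t ht)
  simpa [Function.comp_def] using h

lemma hdA1 (hW : ∀ τ ∈ Ici (0:ℝ), HasDerivAt W (Lc A (W τ)) τ) (t : ℝ) (ht : t ∈ Ici (0:ℝ)) :
    HasDerivAt (fun s => A ((W s).2)) (A ((Lc A (W t)).2)) t := by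
  have h := A.hasFDerivAt.comp_hasDerivAt t (hd1 hW t ht)
  simpa [Function.comp_def] using h

lemma hdP (hW : ∀ τ ∈ Ici (0:ℝ), HasDerivAt W (Lc A (W τ)) τ) (t : ℝ) (ht : t ∈ Ici (0:ℝ)) : HasDerivAt (PP W) (2 * RR1 A W t) t := by
  have h := HasDerivAt.inner ℝ (hd1 hW t ht) (hd1 hW t ht)
  refine h.congr_deriv ?_; symm
  rw [real_inner_comm ((W t).2) ((Lc A (W t)).2)]
  simp only [RR1]; ring

lemma hdM (hW : ∀ τ ∈ Ici (0:ℝ), HasDerivAt W (Lc A (W τ)) τ) (t : ℝ) (ht : t ∈ Ici (0:ℝ)) : HasDerivAt (MM W) (2 * RR W t) t := by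
  have h := HasDerivAt.inner ℝ (hd0 hW t ht) (hd0 hW t ht)
  refine h.congr_deriv ?_; symm
  rw [real_inner_comm ((W t).1) ((W t).2)]
  simp only [RR]; ring

lemma hdQ (hW : ∀ τ ∈ Ici (0:ℝ), HasDerivAt W (Lc A (W τ)) τ) (hA : IsSelfAdjoint A) (t : ℝ) (ht : t ∈ Ici (0:ℝ)) :
    HasDerivAt (QQ A W) (2 * CC A W t) t := by
  have h := HasDerivAt.inner ℝ (hdA0 hW t ht) (hd0 hW t ht)
  refine h.congr_deriv ?_; symm
  rw [hsym hA ((W t).2) ((W t).1)]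
  simp [CC]; ring

lemma hdR (hW : ∀ τ ∈ Ici (0:ℝ), HasDerivAt W (Lc A (W τ)) τ) (t : ℝ) (ht : t ∈ Ici (0:ℝ)) :
    HasDerivAt (RR W) (PP W t - QQ A W t - RR W t) t := by
  have h := HasDerivAt.inner ℝ (hd0 hW t ht) (hd1 hW t ht)
  refine h.congr_deriv ?_; symm
  have e0 : ⟪(W t).1, (Lc A (W t)).2⟫ = -QQ A W t - RR W t := by
    rw [show (Lc A (W t)).2 = -A ((W t).1) - (W t).2 from rfl, inner_sub_right, inner_neg_right,
      real_inner_comm (A ((W t).1)) ((W t).1)]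
    simp only [QQ, RR]
  rw [e0]; simp only [PP]; ring

lemma hdP1 (hW : ∀ τ ∈ Ici (0:ℝ), HasDerivAt W (Lc A (W τ)) τ) (t : ℝ) (ht : t ∈ Ici (0:ℝ)) :
    HasDerivAt (PP1 A W) (-2 * CC1 A W t - 2 * PP1 A W t) t := by
  have h := HasDerivAt.inner ℝ (hd2 hW t ht) (hd2 hW t ht)
  refine h.congr_deriv ?_; symm
  have e1 : ⟪(Lc A (W t)).2, (Lc A (Lc A (W t))).2⟫
      = -CC1 A W t - PP1 A W t := by
    rw [show (Lc A (Lc A (W t))).2 = -A ((W t).2) - (Lc A (W t)).2 from rfl, inner_sub_right,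
      inner_neg_right, real_inner_comm (A ((W t).2)) ((Lc A (W t)).2)]
    simp only [CC1, PP1]
  rw [real_inner_comm ((Lc A (W t)).2) ((Lc A (Lc A (W t))).2), e1]
  ring

lemma hdQ1 (hW : ∀ τ ∈ Ici (0:ℝ), HasDerivAt W (Lc A (W τ)) τ) (hA : IsSelfAdjoint A) (t : ℝ) (ht : t ∈ Ici (0:ℝ)) :
    HasDerivAt (QQ1 A W) (2 * CC1 A W t) t := by
  have h := HasDerivAt.inner ℝ (hdA1 hW t ht) (hd1 hW t ht)
  refine h.congr_deriv ?_; symm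
  rw [hsym hA ((Lc A (W t)).2) ((W t).2)]
  simp [CC1]; ring

lemma hdR1 (hW : ∀ τ ∈ Ici (0:ℝ), HasDerivAt W (Lc A (W τ)) τ) (t : ℝ) (ht : t ∈ Ici (0:ℝ)) :
    HasDerivAt (RR1 A W) (PP1 A W t - QQ1 A W t - RR1 A W t) t := by
  have h := HasDerivAt.inner ℝ (hd1 hW t ht) (hd2 hW t ht)
  refine h.congr_deriv ?_; symm
  have e1 : ⟪(W t).2, (Lc A (Lc A (W t))).2⟫ = -QQ1 A W t - RR1 A W t := by
    rw [show (Lc A (Lc A (W t))).2 = -A ((W t).2) - (Lc A (W t)).2 from rfl, inner_sub_right,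
      inner_neg_right, real_inner_comm (A ((W t).2)) ((W t).2)]
    simp only [QQ1, RR1]
  rw [e1]
  simp only [PP1]; ring

lemma eqR1 (t : ℝ) : RR1 A W t = -CC A W t - PP W t := by
  show ⟪(W t).2, (Lc A (W t)).2⟫ = _
  rw [show (Lc A (W t)).2 = -A ((W t).1) - (W t).2 from rfl, inner_sub_right, inner_neg_right,
    real_inner_comm (A ((W t).1)) ((W t).2)]
  simp only [CC, PP]

noncomputable def Ef (A : H →L[ℝ] H) (W : ℝ → H × H) : ℝ → ℝ :=
  fun s => PP W s + QQ A W s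
noncomputable def Gf (A : H →L[ℝ] H) (W : ℝ → H × H) : ℝ → ℝ :=
  fun s => QQ A W s + PP W s + RR W s + (1/2) * MM W s
noncomputable def A1f (A : H →L[ℝ] H) (W : ℝ → H × H) : ℝ → ℝ :=
  fun s => s * Ef A W s + Gf A W s
noncomputable def E1f (A : H →L[ℝ] H) (W : ℝ → H × H) : ℝ → ℝ :=
  fun s => PP1 A W s + QQ1 A W s
noncomputable def G1f (A : H →L[ℝ] H) (W : ℝ → H × H) : ℝ → ℝ :=
  fun s => QQ1 A W s + PP1 A W s + RR1 A W s + (1/2) * PP W s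
noncomputable def Phif (A : H →L[ℝ] H) (W : ℝ → H × H) : ℝ → ℝ :=
  fun s => (1+s) * Ef A W s + RR W s + (1/2) * MM W s
noncomputable def Phi1f (A : H →L[ℝ] H) (W : ℝ → H × H) : ℝ → ℝ :=
  fun s => (1+s) * E1f A W s + RR1 A W s + (1/2) * PP W s
noncomputable def Df (A : H →L[ℝ] H) (W : ℝ → H × H) : ℝ → ℝ :=
  fun s => (((1+s)^3 - 1)/3) * E1f A W s + ((1+s)^2 + 4*(1+s) + 8) * G1f A W s
    + 3 * Ef A W s + Phif A W s
noncomputable def Kf (A : H →L[ℝ] H) (W : ℝ → H × H) : ℝ → ℝ :=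
  fun s => (((1+s)^2 - 1)/2) * Phi1f A W s - (1/2)*(1+s)*PP W s + (5/4) * Phif A W s
    + (13/4) * Ef A W s + ((1+s)^2 + 4*(1+s) + 8) * G1f A W s

noncomputable def dDf (A : H →L[ℝ] H) (W : ℝ → H × H) : ℝ → ℝ :=
  fun t => ((1+t)^2 * E1f A W t + (((1+t)^3 - 1)/3) * (-2 * PP1 A W t))
    + ((2*(1+t)+4) * G1f A W t + ((1+t)^2 + 4*(1+t) + 8) * (-(PP1 A W t + QQ1 A W t)))
    + 3 * (-2 * PP W t) + (-2 * t * PP W t)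
noncomputable def dKf (A : H →L[ℝ] H) (W : ℝ → H × H) : ℝ → ℝ :=
  fun t => ((1+t) * Phi1f A W t + (((1+t)^2 - 1)/2) * (-2 * t * PP1 A W t))
    - ((1/2) * PP W t + ((1/2)*(1+t)) * (2 * RR1 A W t))
    + (5/4) * (-2 * t * PP W t) + (13/4) * (-2 * PP W t)
    + ((2*(1+t)+4) * G1f A W t + ((1+t)^2 + 4*(1+t) + 8) * (-(PP1 A W t + QQ1 A W t)))

section Funcs
variable (hW : ∀ τ ∈ Ici (0:ℝ), HasDerivAt W (Lc A (W τ)) τ) (hA : IsSelfAdjoint A)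

lemma hphi (t : ℝ) : HasDerivAt (fun s : ℝ => ((1+s)^3 - 1)/3) ((1+t)^2) t := by
  have h := ((((hasDerivAt_id t).const_add 1).pow 3).sub_const 1).div_const 3
  refine h.congr_deriv ?_; symm
  simp only [id_eq]; push_cast; ring

lemma hpsi (t : ℝ) : HasDerivAt (fun s : ℝ => (1+s)^2 + 4*(1+s) + 8) (2*(1+t)+4) t := by
  have h := ((((hasDerivAt_id t).const_add 1).pow 2).add
    (((hasDerivAt_id t).const_add 1).const_mul 4)).add_const 8
  refine h.congr_deriv ?_; symm
  simp only [id_eq]; push_cast; ring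

lemma hkap (t : ℝ) : HasDerivAt (fun s : ℝ => ((1+s)^2 - 1)/2) (1+t) t := by
  have h := ((((hasDerivAt_id t).const_add 1).pow 2).sub_const 1).div_const 2
  refine h.congr_deriv ?_; symm
  simp only [id_eq]; push_cast; ring

include hW hA

lemma hdEf (t : ℝ) (ht : t ∈ Ici (0:ℝ)) : HasDerivAt (Ef A W) (-2 * PP W t) t := by
  have h := (hdP hW t ht).add (hdQ hW hA t ht)
  refine h.congr_deriv ?_; symm
  rw [eqR1]; ring

lemma hdGf (t : ℝ) (ht : t ∈ Ici (0:ℝ)) :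
    HasDerivAt (Gf A W) (-(PP W t + QQ A W t)) t := by
  have h := (((hdQ hW hA t ht).add (hdP hW t ht)).add (hdR hW t ht)).add
    ((hdM hW t ht).const_mul (1/2))
  refine h.congr_deriv ?_; symm
  rw [eqR1]; ring

lemma hdA1f (t : ℝ) (ht : t ∈ Ici (0:ℝ)) :
    HasDerivAt (A1f A W) (-2 * t * PP W t) t := by
  have h := ((hasDerivAt_id t).mul (hdEf hW hA t ht)).add (hdGf hW hA t ht)
  refine h.congr_deriv ?_; symm
  simp only [id_eq, Ef]; ring

lemma hdE1f (t : ℝ) (ht : t ∈ Ici (0:ℝ)) :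
    HasDerivAt (E1f A W) (-2 * PP1 A W t) t := by
  have h := (hdP1 hW t ht).add (hdQ1 hW hA t ht)
  refine h.congr_deriv ?_; symm
  ring

lemma hdG1f (t : ℝ) (ht : t ∈ Ici (0:ℝ)) :
    HasDerivAt (G1f A W) (-(PP1 A W t + QQ1 A W t)) t := by
  have h := (((hdQ1 hW hA t ht).add (hdP1 hW t ht)).add (hdR1 hW t ht)).add
    ((hdP hW t ht).const_mul (1/2))
  refine h.congr_deriv ?_; symm
  ring

lemma hdPhif (t : ℝ) (ht : t ∈ Ici (0:ℝ)) :
    HasDerivAt (Phif A W) (-2 * t * PP W t) t := by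
  have h := ((((hasDerivAt_id t).const_add 1).mul (hdEf hW hA t ht)).add (hdR hW t ht)).add
    ((hdM hW t ht).const_mul (1/2))
  refine h.congr_deriv ?_; symm
  simp only [id_eq, Ef]; ring

lemma hdPhi1f (t : ℝ) (ht : t ∈ Ici (0:ℝ)) :
    HasDerivAt (Phi1f A W) (-2 * t * PP1 A W t) t := by
  have h := ((((hasDerivAt_id t).const_add 1).mul (hdE1f hW hA t ht)).add (hdR1 hW t ht)).add
    ((hdP hW t ht).const_mul (1/2))
  refine h.congr_deriv ?_; symm
  rw [eqR1]
  simp only [id_eq, E1f]; ring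


lemma hdDf (t : ℝ) (ht : t ∈ Ici (0:ℝ)) : HasDerivAt (Df A W) (dDf A W t) t := by
  have h := ((((hphi t).mul (hdE1f hW hA t ht)).add ((hpsi t).mul (hdG1f hW hA t ht))).add
    ((hdEf hW hA t ht).const_mul 3)).add (hdPhif hW hA t ht)
  exact h

lemma hdKf (t : ℝ) (ht : t ∈ Ici (0:ℝ)) : HasDerivAt (Kf A W) (dKf A W t) t := by
  have hc : HasDerivAt (fun s : ℝ => (1/2)*(1+s)) (1/2) t := by
    have h := ((hasDerivAt_id t).const_add 1).const_mul (1/2)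
    refine h.congr_deriv ?_; symm; ring
  have h := (((((hkap t).mul (hdPhi1f hW hA t ht)).sub (hc.mul (hdP hW t ht))).add
    ((hdPhif hW hA t ht).const_mul (5/4))).add ((hdEf hW hA t ht).const_mul (13/4))).add
    ((hpsi t).mul (hdG1f hW hA t ht))
  exact h

end Funcs

section Pointwise

lemma hPnn (t : ℝ) : 0 ≤ PP W t := real_inner_self_nonneg
lemma hMnn (t : ℝ) : 0 ≤ MM W t := real_inner_self_nonneg
lemma hP1nn (t : ℝ) : 0 ≤ PP1 A W t := real_inner_self_nonneg
lemma hQnn (hpos : ∀ x : H, 0 ≤ ⟪A x, x⟫) (t : ℝ) : 0 ≤ QQ A W t := hpos _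
lemma hQ1nn (hpos : ∀ x : H, 0 ≤ ⟪A x, x⟫) (t : ℝ) : 0 ≤ QQ1 A W t := hpos _

lemma comb0 (t a : ℝ) : 0 ≤ MM W t + 2*a*RR W t + a^2 * PP W t :=
  comb_nonneg ((W t).1) ((W t).2) a
lemma comb1 (t a : ℝ) : 0 ≤ PP W t + 2*a*RR1 A W t + a^2 * PP1 A W t :=
  comb_nonneg ((W t).2) ((Lc A (W t)).2) a

lemma hEnn (hpos : ∀ x : H, 0 ≤ ⟪A x, x⟫) (t : ℝ) : 0 ≤ Ef A W t :=
  add_nonneg (hPnn t) (hQnn hpos t)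
lemma hE1nn (hpos : ∀ x : H, 0 ≤ ⟪A x, x⟫) (t : ℝ) : 0 ≤ E1f A W t :=
  add_nonneg (hP1nn t) (hQ1nn hpos t)

lemma hGgeM (hpos : ∀ x : H, 0 ≤ ⟪A x, x⟫) (t : ℝ) : (1/4) * MM W t ≤ Gf A W t := by
  simp only [Gf]; linarith [comb0 (W := W) t 2, hQnn (W := W) hpos t]
lemma hGnn (hpos : ∀ x : H, 0 ≤ ⟪A x, x⟫) (t : ℝ) : 0 ≤ Gf A W t := by
  linarith [hGgeM (W := W) hpos t, hMnn (W := W) t]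
lemma hQleG (t : ℝ) : QQ A W t ≤ Gf A W t := by
  simp only [Gf]; linarith [comb0 (W := W) t 2, hMnn (W := W) t]
lemma hPleG (hpos : ∀ x : H, 0 ≤ ⟪A x, x⟫) (t : ℝ) : PP W t ≤ 4 * Gf A W t := by
  simp only [Gf]; linarith [comb0 (W := W) t (3/2), hQnn (W := W) hpos t, hMnn (W := W) t]
lemma hEleG (hpos : ∀ x : H, 0 ≤ ⟪A x, x⟫) (t : ℝ) : Ef A W t ≤ 5 * Gf A W t := by
  have h1 := hPleG (W := W) hpos t
  have h2 := hQleG (W := W) (A := A) t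
  simp only [Ef]; linarith
lemma hG1geP (hpos : ∀ x : H, 0 ≤ ⟪A x, x⟫) (t : ℝ) : (1/4) * PP W t ≤ G1f A W t := by
  simp only [G1f]; linarith [comb1 (W := W) (A := A) t 2, hQ1nn (W := W) hpos t]
lemma hG1nn (hpos : ∀ x : H, 0 ≤ ⟪A x, x⟫) (t : ℝ) : 0 ≤ G1f A W t := by
  linarith [hG1geP (W := W) hpos t, hPnn (W := W) t]
lemma hQ1leG1 (t : ℝ) : QQ1 A W t ≤ G1f A W t := by
  simp only [G1f]; linarith [comb1 (W := W) (A := A) t 2, hPnn (W := W) t]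
lemma hP1leG1 (hpos : ∀ x : H, 0 ≤ ⟪A x, x⟫) (t : ℝ) : PP1 A W t ≤ 4 * G1f A W t := by
  simp only [G1f]
  linarith [comb1 (W := W) (A := A) t (3/2), hQ1nn (W := W) hpos t, hPnn (W := W) t]
lemma hE1leG1 (hpos : ∀ x : H, 0 ≤ ⟪A x, x⟫) (t : ℝ) : E1f A W t ≤ 5 * G1f A W t := by
  have h1 := hP1leG1 (W := W) hpos t
  have h2 := hQ1leG1 (W := W) (A := A) t
  simp only [E1f]; linarith
lemma hG1b (hpos : ∀ x : H, 0 ≤ ⟪A x, x⟫) (t : ℝ) :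
    G1f A W t ≤ 2 * E1f A W t + PP W t := by
  simp only [G1f, E1f]
  have hc := comb1 (W := W) (A := A) t (-1)
  norm_num at hc
  linarith [hc, hQ1nn (W := W) hpos t, hP1nn (W := W) (A := A) t]
lemma hPhinn (hpos : ∀ x : H, 0 ≤ ⟪A x, x⟫) {t : ℝ} (ht : 0 ≤ t) : 0 ≤ Phif A W t := by
  simp only [Phif, Ef]
  nlinarith [comb0 (W := W) t 2, hQnn (W := W) hpos t, hMnn (W := W) t,
    mul_nonneg ht (hEnn (W := W) hpos t), hEnn (W := W) hpos t, hPnn (W := W) t]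
lemma hPhi1nn (hpos : ∀ x : H, 0 ≤ ⟪A x, x⟫) {t : ℝ} (ht : 0 ≤ t) : 0 ≤ Phi1f A W t := by
  have h := mul_nonneg ht (hE1nn (W := W) hpos t)
  simp only [Phi1f, E1f] at *
  nlinarith [comb1 (W := W) (A := A) t 2, hQ1nn (W := W) hpos t, hPnn (W := W) t,
    hP1nn (W := W) (A := A) t]
lemma hPhi1geP (hpos : ∀ x : H, 0 ≤ ⟪A x, x⟫) {t : ℝ} (ht : 0 ≤ t) :
    (1/4) * PP W t ≤ Phi1f A W t := by
  have h := mul_nonneg ht (hE1nn (W := W) hpos t)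
  simp only [Phi1f, E1f] at *
  nlinarith [comb1 (W := W) (A := A) t 2, hQ1nn (W := W) hpos t]
lemma hPleE (hpos : ∀ x : H, 0 ≤ ⟪A x, x⟫) (t : ℝ) : PP W t ≤ Ef A W t := by
  simp only [Ef]; linarith [hQnn (W := W) hpos t]
lemma hP1leE1 (hpos : ∀ x : H, 0 ≤ ⟪A x, x⟫) (t : ℝ) : PP1 A W t ≤ E1f A W t := by
  simp only [E1f]; linarith [hQ1nn (W := W) hpos t]

lemma dDf_nonpos (hpos : ∀ x : H, 0 ≤ ⟪A x, x⟫) {t : ℝ} (ht : 0 ≤ t) : dDf A W t ≤ 0 := by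
  have key : (2*(1+t)+4) * G1f A W t ≤ (2*(1+t)+4) * (2 * E1f A W t + PP W t) :=
    mul_le_mul_of_nonneg_left (hG1b (W := W) hpos t) (by linarith)
  have h2 : 0 ≤ (((1+t)^3 - 1)/3) * PP1 A W t := by
    have h3 : (0:ℝ) ≤ ((1+t)^3 - 1)/3 := by nlinarith [mul_nonneg (mul_nonneg ht ht) ht]
    exact mul_nonneg h3 (hP1nn (W := W) (A := A) t)
  simp only [E1f] at key
  simp only [dDf, E1f]
  nlinarith [key, h2, hPnn (W := W) t, mul_nonneg ht (hPnn (W := W) t)]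

lemma dKf_nonpos (hpos : ∀ x : H, 0 ≤ ⟪A x, x⟫) {t : ℝ} (ht : 0 ≤ t) : dKf A W t ≤ 0 := by
  have key : (2*(1+t)+4) * G1f A W t ≤ (2*(1+t)+4) * (2 * E1f A W t + PP W t) :=
    mul_le_mul_of_nonneg_left (hG1b (W := W) hpos t) (by linarith)
  have h3 : 0 ≤ (((1+t)^2 - 1)/2) * (t * PP1 A W t) := by
    have h4 : (0:ℝ) ≤ ((1+t)^2 - 1)/2 := by nlinarith
    exact mul_nonneg h4 (mul_nonneg ht (hP1nn (W := W) (A := A) t))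
  simp only [E1f] at key
  simp only [dKf, Phi1f, E1f]
  nlinarith [key, h3, hPnn (W := W) t]

end Pointwise

section CoreEst
variable (hW : ∀ τ ∈ Ici (0:ℝ), HasDerivAt W (Lc A (W τ)) τ) (hA : IsSelfAdjoint A)
  (hpos : ∀ x : H, 0 ≤ ⟪A x, x⟫)
include hW hA hpos

lemma mEf {t : ℝ} (ht : 0 ≤ t) : Ef A W t ≤ Ef A W 0 :=
  antitone_of (F' := fun s => -2 * PP W s) (fun s hs => hdEf hW hA s hs)
    (fun s _ => by show -2 * PP W s ≤ 0; linarith [hPnn (W := W) s]) ht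

lemma mGf {t : ℝ} (ht : 0 ≤ t) : Gf A W t ≤ Gf A W 0 :=
  antitone_of (F' := fun s => -(PP W s + QQ A W s)) (fun s hs => hdGf hW hA s hs)
    (fun s _ => by show -(PP W s + QQ A W s) ≤ 0; linarith [hPnn (W := W) s, hQnn (W := W) hpos s]) ht

lemma mA1f {t : ℝ} (ht : 0 ≤ t) : A1f A W t ≤ A1f A W 0 :=
  antitone_of (F' := fun s => -2 * s * PP W s) (fun s hs => hdA1f hW hA s hs)
    (fun s hs => by show -2 * s * PP W s ≤ 0; nlinarith [hPnn (W := W) s, le_of_lt (mem_Ioi.mp hs)]) ht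

lemma mE1f {t : ℝ} (ht : 0 ≤ t) : E1f A W t ≤ E1f A W 0 :=
  antitone_of (F' := fun s => -2 * PP1 A W s) (fun s hs => hdE1f hW hA s hs)
    (fun s _ => by show -2 * PP1 A W s ≤ 0; linarith [hP1nn (W := W) (A := A) s]) ht

lemma mPhi1f {t : ℝ} (ht : 0 ≤ t) : Phi1f A W t ≤ Phi1f A W 0 :=
  antitone_of (F' := fun s => -2 * s * PP1 A W s) (fun s hs => hdPhi1f hW hA s hs)
    (fun s hs => by show -2 * s * PP1 A W s ≤ 0; nlinarith [hP1nn (W := W) (A := A) s, le_of_lt (mem_Ioi.mp hs)]) ht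

lemma mDf {t : ℝ} (ht : 0 ≤ t) : Df A W t ≤ Df A W 0 :=
  antitone_of (F' := dDf A W) (fun s hs => hdDf hW hA s hs)
    (fun s hs => dDf_nonpos (W := W) hpos (le_of_lt (mem_Ioi.mp hs))) ht

lemma mKf {t : ℝ} (ht : 0 ≤ t) : Kf A W t ≤ Kf A W 0 :=
  antitone_of (F' := dKf A W) (fun s hs => hdKf hW hA s hs)
    (fun s hs => dKf_nonpos (W := W) hpos (le_of_lt (mem_Ioi.mp hs))) ht

lemma core0 {t : ℝ} (ht : 0 ≤ t) : MM W t + (1+t) * Ef A W t ≤ 10 * Gf A W 0 := by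
  have h1 := mGf hW hA hpos ht
  have h2 := mEf hW hA hpos ht
  have h3 := mA1f hW hA hpos ht
  have e0 : A1f A W 0 = Gf A W 0 := by simp [A1f]
  have e1 : A1f A W t = t * Ef A W t + Gf A W t := rfl
  rw [e0, e1] at h3
  have h4 := hGgeM (W := W) hpos t
  have h5 := hGnn (W := W) hpos t
  have h6 := hEleG (W := W) hpos 0
  linarith [h1, h2, h3, h4, h5, h6]

lemma core1 {t : ℝ} (ht : 0 ≤ t) :
    (1+t)^2 * (PP W t + (1+t) * E1f A W t) ≤ 2000 * (Gf A W 0 + G1f A W 0) := by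
  have hg0 : 0 ≤ Gf A W 0 := hGnn (W := W) hpos 0
  have hg1 : 0 ≤ G1f A W 0 := hG1nn (W := W) hpos 0
  have hK := mKf hW hA hpos ht
  have eK0 : Kf A W 0 = -(1/2) * PP W 0 + (5/4) * Phif A W 0 + (13/4) * Ef A W 0
      + 13 * G1f A W 0 := by
    norm_num [Kf]
  have ePhif0 : Phif A W 0 = Ef A W 0 + RR W 0 + (1/2) * MM W 0 := by norm_num [Phif]
  have ePhi1f0 : Phi1f A W 0 = E1f A W 0 + RR1 A W 0 + (1/2) * PP W 0 := by norm_num [Phi1f]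
  have hcm0 := comb0 (W := W) 0 (-1)
  norm_num at hcm0
  have hPhif0 : Phif A W 0 ≤ 11 * Gf A W 0 := by
    linarith [ePhif0.le, ePhif0.ge, hEleG (W := W) hpos 0, hPleG (W := W) hpos 0,
      hGgeM (W := W) hpos 0, hMnn (W := W) 0, hcm0]
  have hK0 : Kf A W 0 ≤ 30 * Gf A W 0 + 13 * G1f A W 0 := by
    rw [eK0]
    linarith [hPhif0, hEleG (W := W) hpos 0, hPnn (W := W) 0]
  have htP : (1+t) * PP W t ≤ 10 * Gf A W 0 := by
    have hc := core0 hW hA hpos ht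
    have h9 : (1+t) * PP W t ≤ (1+t) * Ef A W t :=
      mul_le_mul_of_nonneg_left (hPleE (W := W) hpos t) (by linarith)
    linarith [hMnn (W := W) t]
  have hkap1 : (((1+t)^2 - 1)/2) * Phi1f A W t ≤ 35 * Gf A W 0 + 13 * G1f A W 0 := by
    have eKt : Kf A W t = (((1+t)^2 - 1)/2) * Phi1f A W t - (1/2)*(1+t)*PP W t
        + (5/4) * Phif A W t + (13/4) * Ef A W t + ((1+t)^2 + 4*(1+t) + 8) * G1f A W t := rfl
    have h5 : 0 ≤ Phif A W t := hPhinn (W := W) hpos ht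
    have h6 : 0 ≤ Ef A W t := hEnn (W := W) hpos t
    have h7 : 0 ≤ ((1+t)^2 + 4*(1+t) + 8) * G1f A W t :=
      mul_nonneg (by nlinarith) (hG1nn (W := W) hpos t)
    nlinarith [hK, hK0, htP, h5, h6, h7, eKt.le, eKt.ge]
  have hPhi1b : (1+t)^2 * Phi1f A W t ≤ 140 * Gf A W 0 + 52 * G1f A W 0 := by
    rcases le_or_gt t 1 with hcase | hcase
    · have h1 : Phi1f A W t ≤ Phi1f A W 0 := mPhi1f hW hA hpos ht
      have hcm1 := comb1 (W := W) (A := A) 0 (-1)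
      norm_num at hcm1
      have h0b : Phi1f A W 0 ≤ 7 * G1f A W 0 + 4 * Gf A W 0 := by
        linarith [ePhi1f0.le, ePhi1f0.ge, hE1leG1 (W := W) hpos 0, hP1leG1 (W := W) hpos 0,
          hPleG (W := W) hpos 0, hG1geP (W := W) hpos 0, hPnn (W := W) 0, hcm1]
      have hb : (1+t)^2 ≤ 4 := by nlinarith
      have hnn : 0 ≤ Phi1f A W t := hPhi1nn (W := W) hpos ht
      nlinarith [mul_le_mul hb (h1.trans h0b) hnn (by norm_num : (0:ℝ) ≤ 4), hg0, hg1]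
    · have hnn : 0 ≤ Phi1f A W t := hPhi1nn (W := W) hpos ht
      have hb : (1+t)^2 ≤ (8/3) * (((1+t)^2 - 1)/2) := by nlinarith
      have h2 := mul_le_mul_of_nonneg_right hb hnn
      nlinarith [hkap1, h2, hg0, hg1]
  have hPt : (1+t)^2 * PP W t ≤ 560 * Gf A W 0 + 208 * G1f A W 0 := by
    have h1 : PP W t ≤ 4 * Phi1f A W t := by linarith [hPhi1geP (W := W) hpos ht]
    have h2 := mul_le_mul_of_nonneg_left h1 (by positivity : (0:ℝ) ≤ (1+t)^2)
    nlinarith [hPhi1b, h2]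
  have hD := mDf hW hA hpos ht
  have eD0 : Df A W 0 = 13 * G1f A W 0 + 3 * Ef A W 0 + Phif A W 0 := by norm_num [Df]
  have hD0 : Df A W 0 ≤ 26 * Gf A W 0 + 13 * G1f A W 0 := by
    rw [eD0]; linarith [hPhif0, hEleG (W := W) hpos 0]
  have hphiE : (((1+t)^3 - 1)/3) * E1f A W t ≤ 26 * Gf A W 0 + 13 * G1f A W 0 := by
    have eDt : Df A W t = (((1+t)^3 - 1)/3) * E1f A W t
        + ((1+t)^2 + 4*(1+t) + 8) * G1f A W t + 3 * Ef A W t + Phif A W t := rfl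
    have h5 : 0 ≤ Phif A W t := hPhinn (W := W) hpos ht
    have h6 : 0 ≤ Ef A W t := hEnn (W := W) hpos t
    have h7 : 0 ≤ ((1+t)^2 + 4*(1+t) + 8) * G1f A W t :=
      mul_nonneg (by nlinarith) (hG1nn (W := W) hpos t)
    nlinarith [hD, hD0, h5, h6, h7, eDt.le, eDt.ge]
  have hE1b : (1+t)^3 * E1f A W t ≤ 104 * Gf A W 0 + 52 * G1f A W 0 := by
    rcases le_or_gt t 1 with hcase | hcase
    · have h1 : E1f A W t ≤ E1f A W 0 := mE1f hW hA hpos ht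
      have h0b : E1f A W 0 ≤ 5 * G1f A W 0 := hE1leG1 (W := W) hpos 0
      have hb : (1+t)^3 ≤ 8 := by nlinarith
      have hnn : 0 ≤ E1f A W t := hE1nn (W := W) hpos t
      nlinarith [mul_le_mul hb (h1.trans h0b) hnn (by norm_num : (0:ℝ) ≤ 8), hg0, hg1]
    · have hnn : 0 ≤ E1f A W t := hE1nn (W := W) hpos t
      have h8 : (2:ℝ)^3 ≤ (1+t)^3 := by nlinarith
      have hb : (1+t)^3 ≤ 4 * (((1+t)^3 - 1)/3) := by nlinarith
      have h2 := mul_le_mul_of_nonneg_right hb hnn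
      nlinarith [hphiE, h2, hg0, hg1]
  nlinarith [hPt, hE1b, hg0, hg1]

end CoreEst

section Bridge

noncomputable def Hn (A : H →L[ℝ] H) (p : H × H) : ℝ :=
  ⟪A p.1, p.1⟫ + (1 / 4) * ‖p.1‖ ^ 2 + ‖p.2 + (1 / 2 : ℝ) • p.1‖ ^ 2

lemma Hn_eval (A : H →L[ℝ] H) (p : H × H) :
    Hn A p = ⟪A p.1, p.1⟫ + ⟪p.2, p.2⟫ + ⟪p.1, p.2⟫ + (1/2) * ⟪p.1, p.1⟫ := by
  simp only [Hn]
  rw [← real_inner_self_eq_norm_sq (p.2 + (1/2:ℝ) • p.1), ← real_inner_self_eq_norm_sq p.1]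
  simp only [inner_add_left, inner_add_right, real_inner_smul_left, real_inner_smul_right,
    real_inner_comm p.2 p.1]
  ring

lemma Hn_nonneg {A : H →L[ℝ] H} (hpos : ∀ x : H, 0 ≤ ⟪A x, x⟫) (p : H × H) : 0 ≤ Hn A p := by
  simp only [Hn]
  have h1 := hpos p.1
  positivity

lemma Hn_le (A : H →L[ℝ] H) (p : H × H) :
    Hn A p ≤ ⟪A p.1, p.1⟫ + ‖p.1‖^2 + 2*‖p.2‖^2 := by
  rw [Hn_eval, ← real_inner_self_eq_norm_sq p.1, ← real_inner_self_eq_norm_sq p.2]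
  have hc := comb_nonneg p.1 p.2 (-1)
  norm_num at hc
  linarith [real_inner_self_nonneg (x := p.2), real_inner_self_eq_norm_sq p.1,
    real_inner_self_eq_norm_sq p.2]

lemma Gf_eq_Hn (A : H →L[ℝ] H) (W : ℝ → H × H) (t : ℝ) : Gf A W t = Hn A (W t) := by
  rw [Hn_eval]
  simp only [Gf, QQ, PP, RR, MM]

lemma G1f_eq_Hn (A : H →L[ℝ] H) (W : ℝ → H × H) (t : ℝ) :
    G1f A W t = Hn A (Lc A (W t)) := by
  rw [Hn_eval]
  simp only [G1f, QQ1, PP1, RR1, PP, Lc_apply]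

lemma hdIter (A : H →L[ℝ] H) (k : ℕ) {f : ℝ → H × H} {f' : H × H} {x : ℝ}
    (hf : HasDerivAt f f' x) :
    HasDerivAt (fun τ => (Lc A)^[k] (f τ)) ((Lc A)^[k] f') x := by
  induction k with
  | zero => simpa using hf
  | succ k ih =>
    have h := (Lc A).hasFDerivAt.comp_hasDerivAt x ih
    simpa [Function.comp_def, Function.iterate_succ_apply'] using h

lemma iterate_comm (A : H →L[ℝ] H) (k : ℕ) (x : H × H) :
    (Lc A)^[k] (Lc A x) = Lc A ((Lc A)^[k] x) := by
  rw [← Function.iterate_succ_apply, Function.iterate_succ_apply']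

noncomputable def RHSsum (A : H →L[ℝ] H) (x : H × H) (n : ℕ) : ℝ :=
  ∑ k ∈ Finset.range (n+1), Hn A ((Lc A)^[k] x)

lemma Hn_bound {A : H →L[ℝ] H} (hpos : ∀ x : H, 0 ≤ ⟪A x, x⟫) (m : ℕ) (p : H × H)
    {a B : ℝ} (ha : 1 ≤ a)
    (h : a^(2*m) * (‖p.1‖^2 + a * (‖p.2‖^2 + ⟪A p.1, p.1⟫)) ≤ B) :
    a^(2*m) * Hn A p ≤ 4 * B := by
  have ha0 : (0:ℝ) ≤ a := by linarith
  have hap : (0:ℝ) ≤ a^(2*m) := by positivity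
  have h1 : (0:ℝ) ≤ ‖p.1‖^2 := by positivity
  have h2 : (0:ℝ) ≤ ‖p.2‖^2 := by positivity
  have h3 : 0 ≤ ⟪A p.1, p.1⟫ := hpos _
  have hle := Hn_le A p
  have k1 : a^(2*m) * ‖p.1‖^2 ≤ B := by
    nlinarith [mul_nonneg hap (mul_nonneg ha0 (add_nonneg h2 h3))]
  have k2 : a^(2*m) * ‖p.2‖^2 ≤ B := by
    nlinarith [mul_nonneg (mul_nonneg hap (by linarith : (0:ℝ) ≤ a - 1)) h2,
      mul_nonneg (mul_nonneg hap ha0) h3, mul_nonneg hap h1]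
  have k3 : a^(2*m) * ⟪A p.1, p.1⟫ ≤ B := by
    nlinarith [mul_nonneg (mul_nonneg hap (by linarith : (0:ℝ) ≤ a - 1)) h3,
      mul_nonneg (mul_nonneg hap ha0) h2, mul_nonneg hap h1]
  nlinarith [mul_le_mul_of_nonneg_left hle hap, k1, k2, k3]

end Bridge

section Glue

lemma hYd (hW : ∀ τ ∈ Ici (0:ℝ), HasDerivAt W (Lc A (W τ)) τ) (k : ℕ) (τ : ℝ)
    (hτ : τ ∈ Ici (0:ℝ)) :
    HasDerivAt (fun σ => ((Lc A)^[k] (W σ)).1) (((Lc A)^[k] (W τ)).2) τ := by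
  have h := hdIter A k (hW τ hτ)
  rw [iterate_comm] at h
  have h2 := (ContinuousLinearMap.fst ℝ H H).hasFDerivAt.comp_hasDerivAt τ h
  simpa [Function.comp_def] using h2

lemma transfer (u : ℝ → H) (hW : ∀ τ ∈ Ici (0:ℝ), HasDerivAt W (Lc A (W τ)) τ)
    (hW1 : ∀ t, (W t).1 = u t) : ∀ k : ℕ,
      (∀ t ∈ Ioi (0:ℝ), iteratedDeriv k u t = ((Lc A)^[k] (W t)).1) ∧
      (iteratedDeriv k u 0 = ((Lc A)^[k] (W 0)).1 ∨ iteratedDeriv k u 0 = 0) := by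
  intro k
  induction k with
  | zero =>
    constructor
    · intro t _
      simp [iteratedDeriv_zero, hW1 t]
    · left
      simp [iteratedDeriv_zero, hW1 0]
  | succ k ih =>
    obtain ⟨h1, _⟩ := ih
    have hEq : ∀ t ∈ Ioi (0:ℝ), deriv (iteratedDeriv k u) t = ((Lc A)^[k+1] (W t)).1 := by
      intro t ht
      have hev : iteratedDeriv k u =ᶠ[nhds t] (fun τ => ((Lc A)^[k] (W τ)).1) := by
        filter_upwards [isOpen_Ioi.mem_nhds ht] with x hx using h1 x hx
      rw [hev.deriv_eq, (hYd hW k t (mem_Ici.mpr (le_of_lt (mem_Ioi.mp ht)))).deriv]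
      rw [Function.iterate_succ_apply']
      rfl
    constructor
    · intro t ht
      rw [iteratedDeriv_succ]
      exact hEq t ht
    · rw [iteratedDeriv_succ]
      by_cases hdiff : DifferentiableAt ℝ (iteratedDeriv k u) 0
      · left
        have hcontY : ContinuousAt (fun τ => ((Lc A)^[k] (W τ)).1) 0 :=
          (hYd hW k 0 self_mem_Ici).continuousAt
        have hval : iteratedDeriv k u 0 = ((Lc A)^[k] (W 0)).1 := by
          have l1 : Filter.Tendsto (iteratedDeriv k u) (nhdsWithin (0:ℝ) (Ioi 0))
              (nhds (iteratedDeriv k u 0)) :=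
            (hdiff.continuousAt.continuousWithinAt).tendsto
          have l2 : Filter.Tendsto (iteratedDeriv k u) (nhdsWithin (0:ℝ) (Ioi 0))
              (nhds (((Lc A)^[k] (W 0)).1)) := by
            apply Filter.Tendsto.congr' _ hcontY.continuousWithinAt.tendsto
            filter_upwards [self_mem_nhdsWithin] with x hx
            exact (h1 x hx).symm
          exact tendsto_nhds_unique l1 l2
        have hIci : ∀ x ∈ Ici (0:ℝ),
            iteratedDeriv k u x = ((Lc A)^[k] (W x)).1 := by
          intro x hx
          rcases eq_or_lt_of_le (mem_Ici.mp hx) with h | h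
          · rw [← h]; exact hval
          · exact h1 x h
        have hw1 : HasDerivWithinAt (fun τ => ((Lc A)^[k] (W τ)).1)
            (((Lc A)^[k] (W 0)).2) (Ici 0) 0 :=
          (hYd hW k 0 self_mem_Ici).hasDerivWithinAt
        have hw2 : HasDerivWithinAt (iteratedDeriv k u)
            (((Lc A)^[k] (W 0)).2) (Ici 0) 0 := hw1.congr hIci hval
        have hw3 : HasDerivWithinAt (iteratedDeriv k u)
            (deriv (iteratedDeriv k u) 0) (Ici 0) 0 :=
          hdiff.hasDerivAt.hasDerivWithinAt
        have hud := uniqueDiffOn_Ici (0:ℝ) 0 self_mem_Ici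
        have heqd := (hw3.derivWithin hud).symm.trans (hw2.derivWithin hud)
        rw [heqd, Function.iterate_succ_apply']
        rfl
      · right
        exact deriv_zero_of_not_differentiableAt hdiff

end Glue

lemma main : ∀ n : ℕ, ∃ C : ℝ, 0 < C ∧
    ∀ (H : Type u) [NormedAddCommGroup H] [InnerProductSpace ℝ H] [CompleteSpace H]
      (A : H →L[ℝ] H), IsSelfAdjoint A → (∀ x : H, 0 ≤ ⟪A x, x⟫) →
      ∀ (W : ℝ → H × H), (∀ τ ∈ Ici (0:ℝ), HasDerivAt W (Lc A (W τ)) τ) →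
      ∀ t ∈ Ici (0:ℝ),
        (1+t)^(2*n) * (‖((Lc A)^[n] (W t)).1‖^2
          + (1+t) * (‖((Lc A)^[n] (W t)).2‖^2
            + ⟪A ((Lc A)^[n] (W t)).1, ((Lc A)^[n] (W t)).1⟫))
        ≤ C * RHSsum A (W 0) n := by
  intro n
  induction n with
  | zero =>
    refine ⟨10, by norm_num, ?_⟩
    intro H _ _ _ A hA hpos W hW t ht
    have h := core0 hW hA hpos (mem_Ici.mp ht)
    have e0 : RHSsum A (W 0) 0 = Hn A (W 0) := by
      simp [RHSsum]
    have e1 : ‖(W t).1‖^2 = MM W t := (real_inner_self_eq_norm_sq _).symm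
    have e2 : ‖(W t).2‖^2 = PP W t := (real_inner_self_eq_norm_sq _).symm
    have e3 : Ef A W t = PP W t + QQ A W t := rfl
    have e4 : Gf A W 0 = Hn A (W 0) := Gf_eq_Hn A W 0
    simp only [Function.iterate_zero, id_eq, Nat.mul_zero, pow_zero, one_mul, e0, e1, e2]
    show MM W t + (1+t) * (PP W t + QQ A W t) ≤ 10 * Hn A (W 0)
    rw [← e3, ← e4]
    exact h
  | succ n ih =>
    obtain ⟨C, hC, hind⟩ := ih
    refine ⟨2^(2*n+3) * 16000 * C, by positivity, ?_⟩
    intro H _ _ _ A hA hpos W hW t ht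
    rw [mem_Ici] at ht
    set s : ℝ := t/2 with hsdef
    have hs0 : (0:ℝ) ≤ s := by positivity
    have hss : s + s = t := by rw [hsdef]; ring
    have hone : (1:ℝ) ≤ 1 + s := by linarith
    -- the shifted, n-times differentiated solution
    set W' : ℝ → H × H := fun τ => (Lc A)^[n] (W (s + τ)) with hW'def
    have hW' : ∀ τ ∈ Ici (0:ℝ), HasDerivAt W' (Lc A (W' τ)) τ := by
      intro τ hτ
      rw [mem_Ici] at hτ
      have h1 : HasDerivAt (fun τ' => W (s + τ')) (Lc A (W (s + τ))) τ := by
        have h := HasDerivAt.scomp (𝕜' := ℝ) τ (hW (s + τ) (by rw [mem_Ici]; linarith))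
          ((hasDerivAt_id τ).const_add s)
        simpa [Function.comp_def] using h
      have h2 := hdIter A n h1
      have h3 : (Lc A)^[n] (Lc A (W (s + τ))) = Lc A (W' τ) := by
        rw [iterate_comm, hW'def]
      rw [h3] at h2
      exact h2
    have hcore := core1 hW' hA hpos hs0
    -- identifications
    have eWs : W' s = (Lc A)^[n] (W t) := by
      rw [hW'def]
      show (Lc A)^[n] (W (s + s)) = _
      rw [hss]
    have eW0 : W' 0 = (Lc A)^[n] (W s) := by
      rw [hW'def]
      show (Lc A)^[n] (W (s + 0)) = _
      rw [add_zero]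
    -- data bounds via induction hypothesis
    have ihW := hind H A hA hpos W hW s (mem_Ici.mpr hs0)
    have hb0 : (1+s)^(2*n) * Hn A ((Lc A)^[n] (W s)) ≤ 4 * (C * RHSsum A (W 0) n) :=
      Hn_bound hpos n _ hone ihW
    set W1 : ℝ → H × H := fun τ => Lc A (W τ) with hW1def
    have hW1 : ∀ τ ∈ Ici (0:ℝ), HasDerivAt W1 (Lc A (W1 τ)) τ := by
      intro τ hτ
      have h := (Lc A).hasFDerivAt.comp_hasDerivAt τ (hW τ hτ)
      simpa [hW1def, Function.comp_def] using h
    have ihW1 := hind H A hA hpos W1 hW1 s (mem_Ici.mpr hs0)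
    have eY1 : (Lc A)^[n] (W1 s) = (Lc A)^[n+1] (W s) := by
      rw [hW1def]
      exact (Function.iterate_succ_apply (Lc A) n (W s)).symm
    rw [eY1] at ihW1
    have hb1 : (1+s)^(2*n) * Hn A ((Lc A)^[n+1] (W s)) ≤ 4 * (C * RHSsum A (W1 0) n) :=
      Hn_bound hpos n _ hone ihW1
    -- sums
    have hRnn : 0 ≤ RHSsum A (W 0) (n+1) := by
      apply Finset.sum_nonneg
      intro k _
      exact Hn_nonneg hpos _
    have hR1 : RHSsum A (W1 0) n ≤ RHSsum A (W 0) (n+1) := by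
      have ekk : ∀ k : ℕ, Hn A ((Lc A)^[k] (W1 0)) = Hn A ((Lc A)^[k+1] (W 0)) := by
        intro k
        rw [hW1def]
        show Hn A ((Lc A)^[k] (Lc A (W 0))) = Hn A ((Lc A)^[k+1] (W 0))
        rw [Function.iterate_succ_apply]
      have e : RHSsum A (W 0) (n+1) = Hn A ((Lc A)^[0] (W 0)) + RHSsum A (W1 0) n := by
        rw [RHSsum, RHSsum]
        simp only [ekk]
        rw [Finset.sum_range_succ' (fun k => Hn A ((Lc A)^[k] (W 0))) (n+1)]
        rw [add_comm]
      rw [e]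
      linarith [Hn_nonneg hpos ((Lc A)^[0] (W 0))]
    have hR0 : RHSsum A (W 0) n ≤ RHSsum A (W 0) (n+1) := by
      have e : RHSsum A (W 0) (n+1) = RHSsum A (W 0) n + Hn A ((Lc A)^[n+1] (W 0)) :=
        Finset.sum_range_succ _ (n+1)
      rw [e]
      linarith [Hn_nonneg hpos ((Lc A)^[n+1] (W 0))]
    -- combine data bounds
    have hgsum : (1+s)^(2*n) * (Gf A W' 0 + G1f A W' 0)
        ≤ 8 * (C * RHSsum A (W 0) (n+1)) := by
      have e1 : Gf A W' 0 = Hn A ((Lc A)^[n] (W s)) := by rw [Gf_eq_Hn, eW0]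
      have e2 : G1f A W' 0 = Hn A ((Lc A)^[n+1] (W s)) := by
        rw [G1f_eq_Hn, eW0, ← Function.iterate_succ_apply' (Lc A) n (W s)]
      rw [e1, e2, mul_add]
      have c1 : C * RHSsum A (W 0) n ≤ C * RHSsum A (W 0) (n+1) :=
        mul_le_mul_of_nonneg_left hR0 hC.le
      have c2 : C * RHSsum A (W1 0) n ≤ C * RHSsum A (W 0) (n+1) :=
        mul_le_mul_of_nonneg_left hR1 hC.le
      linarith
    -- multiply the core estimate by (1+s)^(2n)
    have hsp : (0:ℝ) ≤ (1+s)^(2*n) := by positivity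
    have hmain : (1+s)^(2*n+2) * (PP W' s + (1+s) * E1f A W' s)
        ≤ 16000 * (C * RHSsum A (W 0) (n+1)) := by
      have h := mul_le_mul_of_nonneg_left hcore hsp
      calc (1+s)^(2*n+2) * (PP W' s + (1+s) * E1f A W' s)
          = (1+s)^(2*n) * ((1+s)^2 * (PP W' s + (1+s) * E1f A W' s)) := by ring
        _ ≤ (1+s)^(2*n) * (2000 * (Gf A W' 0 + G1f A W' 0)) := h
        _ = 2000 * ((1+s)^(2*n) * (Gf A W' 0 + G1f A W' 0)) := by ring
        _ ≤ 2000 * (8 * (C * RHSsum A (W 0) (n+1))) :=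
            mul_le_mul_of_nonneg_left hgsum (by norm_num)
        _ = 16000 * (C * RHSsum A (W 0) (n+1)) := by ring
    -- identify the terms at time t
    set Z : H × H := (Lc A)^[n+1] (W t) with hZdef
    have eZ : Z = Lc A ((Lc A)^[n] (W t)) := Function.iterate_succ_apply' (Lc A) n (W t)
    have eP : PP W' s = ‖Z.1‖^2 := by
      rw [PP, eWs, eZ]
      exact real_inner_self_eq_norm_sq _
    have eE1 : E1f A W' s = ‖Z.2‖^2 + ⟪A Z.1, Z.1⟫ := by
      rw [E1f, PP1, QQ1, eWs, eZ]
      rw [real_inner_self_eq_norm_sq]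
      simp [Lc_apply]
    -- final powers comparison
    have ht2 : 1 + t ≤ 2 * (1+s) := by rw [← hss]; linarith
    have ht0 : (0:ℝ) ≤ 1 + t := by linarith
    have hZ1 : (0:ℝ) ≤ ‖Z.1‖^2 := by positivity
    have hZ2 : (0:ℝ) ≤ ‖Z.2‖^2 + ⟪A Z.1, Z.1⟫ := by
      have := hpos Z.1
      positivity
    have step1 : (1+t)^(2*n+2) ≤ 2^(2*n+2) * (1+s)^(2*n+2) := by
      calc (1+t)^(2*n+2) ≤ (2*(1+s))^(2*n+2) := pow_le_pow_left₀ ht0 ht2 _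
        _ = 2^(2*n+2) * (1+s)^(2*n+2) := mul_pow 2 (1+s) _
    have step2 : ‖Z.1‖^2 + (1+t) * (‖Z.2‖^2 + ⟪A Z.1, Z.1⟫)
        ≤ 2 * (‖Z.1‖^2 + (1+s) * (‖Z.2‖^2 + ⟪A Z.1, Z.1⟫)) := by
      have h := mul_le_mul_of_nonneg_right ht2 hZ2
      linarith
    have e2n : 2*(n+1) = 2*n+2 := by ring
    rw [e2n]
    have hL0 : (0:ℝ) ≤ ‖Z.1‖^2 + (1+t) * (‖Z.2‖^2 + ⟪A Z.1, Z.1⟫) := by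
      have := mul_nonneg ht0 hZ2
      linarith
    have hP2 : (0:ℝ) ≤ 2^(2*n+2) * (1+s)^(2*n+2) := by positivity
    calc (1+t)^(2*n+2) * (‖Z.1‖^2 + (1+t) * (‖Z.2‖^2 + ⟪A Z.1, Z.1⟫))
        ≤ (2^(2*n+2) * (1+s)^(2*n+2)) *
            (2 * (‖Z.1‖^2 + (1+s) * (‖Z.2‖^2 + ⟪A Z.1, Z.1⟫))) := by
          apply mul_le_mul step1 step2 hL0 hP2
      _ = 2^(2*n+3) * ((1+s)^(2*n+2) * (PP W' s + (1+s) * E1f A W' s)) := by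
          rw [eP, eE1]; ring
      _ ≤ 2^(2*n+3) * (16000 * (C * RHSsum A (W 0) (n+1))) := by
          apply mul_le_mul_of_nonneg_left hmain (by positivity)
      _ = 2^(2*n+3) * 16000 * C * RHSsum A (W 0) (n+1) := by ring

end Core

end Stmt6

/-- Lemma 2.6, estimate for time derivatives:
`‖u⁽ⁿ⁾(t)‖² + (1+t) E(u⁽ⁿ⁾;t) ≤ C (1+t)^{-2n} ‖(u0,u1)‖_{D(Lⁿ)}²`. -/
theorem stmt_6 :
    ∀ n : ℕ, ∃ C : ℝ, 0 < C ∧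
      ∀ (H : Type u) [NormedAddCommGroup H] [InnerProductSpace ℝ H] [CompleteSpace H]
        (A : H →L[ℝ] H), IsSelfAdjoint A → (∀ x : H, 0 ≤ ⟪A x, x⟫) →
        ∀ (u : ℝ → H) (u0 u1 : H), ContDiff ℝ 2 u →
          (∀ t ≥ (0:ℝ), deriv (deriv u) t + A (u t) + deriv u t = 0) →
          u 0 = u0 → deriv u 0 = u1 →
          ∀ t ≥ (0:ℝ),
            ‖iteratedDeriv n u t‖ ^ 2
                + (1 + t) * (‖deriv (iteratedDeriv n u) t‖ ^ 2
                    + ⟪A (iteratedDeriv n u t), iteratedDeriv n u t⟫)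
              ≤ C * (1 + t) ^ (-(2 * (n : ℝ))) *
                  ∑ k ∈ Finset.range (n + 1),
                    (fun p : H × H =>
                        ⟪A p.1, p.1⟫ + (1 / 4) * ‖p.1‖ ^ 2
                          + ‖p.2 + (1 / 2 : ℝ) • p.1‖ ^ 2)
                      ((fun p : H × H => (p.2, -A p.1 - p.2))^[k] (u0, u1)) := by
  intro n
  obtain ⟨C, hC, hP⟩ := Stmt6.main.{u} n
  refine ⟨C, hC, ?_⟩
  intro H _ _ _ A hA hpos u u0 u1 hu hequ hu0 hu1 t ht
  set W : ℝ → H × H := fun τ => (u τ, deriv u τ) with hWdef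
  have hud : ∀ τ : ℝ, HasDerivAt u (deriv u τ) τ := fun τ =>
    ((hu.differentiable (by norm_num)) τ).hasDerivAt
  have hud2 : ∀ τ : ℝ, HasDerivAt (deriv u) (deriv (deriv u) τ) τ := by
    have h2 := ((contDiff_succ_iff_deriv (n := 1)).mp (by exact_mod_cast hu)).2.2
    exact fun τ => ((h2.differentiable (by norm_num)) τ).hasDerivAt
  have hW : ∀ τ ∈ Set.Ici (0:ℝ), HasDerivAt W (Stmt6.Lc A (W τ)) τ := by
    intro τ hτ
    have heq2 : deriv (deriv u) τ = -A (u τ) - deriv u τ := by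
      have h := hequ τ (Set.mem_Ici.mp hτ)
      have h' : deriv (deriv u) τ + (A (u τ) + deriv u τ) = 0 := by
        rw [← add_assoc]; exact h
      rw [add_eq_zero_iff_eq_neg] at h'
      rw [h']; abel
    have hp := (hud τ).prodMk (hud2 τ)
    rw [heq2] at hp
    exact hp
  have hW1 : ∀ τ : ℝ, (W τ).1 = u τ := fun _ => rfl
  have hbound := hP H A hA hpos W hW t (Set.mem_Ici.mpr ht)
  set Y : H × H := (Stmt6.Lc A)^[n] (W t) with hYdef
  have htr := Stmt6.transfer u hW hW1
  have hLle : ‖iteratedDeriv n u t‖ ^ 2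
      + (1 + t) * (‖deriv (iteratedDeriv n u) t‖ ^ 2
        + ⟪A (iteratedDeriv n u t), iteratedDeriv n u t⟫)
      ≤ ‖Y.1‖ ^ 2 + (1 + t) * (‖Y.2‖ ^ 2 + ⟪A Y.1, Y.1⟫) := by
    rcases eq_or_lt_of_le ht with h0 | h0
    · -- t = 0
      have ex := (htr n).2
      have ey : deriv (iteratedDeriv n u) 0 = Y.2 ∨ deriv (iteratedDeriv n u) 0 = 0 := by
        have h := (htr (n+1)).2
        rw [iteratedDeriv_succ] at h
        rcases h with h | h
        · left
          rw [h, hYdef, ← h0, Function.iterate_succ_apply']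
          rfl
        · right; exact h
      rw [← h0]
      have c1 : ‖iteratedDeriv n u 0‖ ^ 2 ≤ ‖Y.1‖ ^ 2 := by
        rcases ex with h | h
        · rw [h, hYdef, ← h0]
        · rw [h, norm_zero]; norm_num
      have c2 : ⟪A (iteratedDeriv n u 0), iteratedDeriv n u 0⟫ ≤ ⟪A Y.1, Y.1⟫ := by
        rcases ex with h | h
        · rw [h, hYdef, ← h0]
        · rw [h]; simpa using hpos Y.1
      have c3 : ‖deriv (iteratedDeriv n u) 0‖ ^ 2 ≤ ‖Y.2‖ ^ 2 := by
        rcases ey with h | h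
        · rw [h]
        · rw [h, norm_zero]; norm_num
      norm_num
      linarith
    · -- t > 0
      have ex := (htr n).1 t h0
      have ey : deriv (iteratedDeriv n u) t = Y.2 := by
        have h := (htr (n+1)).1 t h0
        rw [iteratedDeriv_succ] at h
        rw [h, hYdef, Function.iterate_succ_apply']
        rfl
      rw [ex, ey]
  have hpow : (0:ℝ) < (1+t)^(2*n) := by positivity
  have hrpow : (1+t) ^ (-(2*(n:ℝ))) = ((1+t)^(2*n) : ℝ)⁻¹ := by
    rw [show -(2*(n:ℝ)) = -((2*n : ℕ):ℝ) by push_cast; ring]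
    rw [Real.rpow_neg (by linarith), Real.rpow_natCast]
  have esum : Stmt6.RHSsum A (W 0) n = ∑ k ∈ Finset.range (n + 1),
      (fun p : H × H => ⟪A p.1, p.1⟫ + (1 / 4) * ‖p.1‖ ^ 2
        + ‖p.2 + (1 / 2 : ℝ) • p.1‖ ^ 2)
      ((fun p : H × H => (p.2, -A p.1 - p.2))^[k] (u0, u1)) := by
    have eW0 : W 0 = (u0, u1) := by
      rw [hWdef]
      show (u 0, deriv u 0) = (u0, u1)
      rw [hu0, hu1]
    rw [eW0, Stmt6.RHSsum]
    apply Finset.sum_congr rfl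
    intro k _
    rw [Stmt6.Lc_iterate_eq]
    rfl
  rw [hrpow, ← esum]
  have e2 : C * ((1+t)^(2*n))⁻¹ * Stmt6.RHSsum A (W 0) n
      = (C * Stmt6.RHSsum A (W 0) n) / (1+t)^(2*n) := by ring
  rw [e2, le_div_iff₀ hpow]
  calc (‖iteratedDeriv n u t‖ ^ 2
        + (1 + t) * (‖deriv (iteratedDeriv n u) t‖ ^ 2
          + ⟪A (iteratedDeriv n u t), iteratedDeriv n u t⟫)) * (1+t)^(2*n)
      ≤ (‖Y.1‖ ^ 2 + (1 + t) * (‖Y.2‖ ^ 2 + ⟪A Y.1, Y.1⟫)) * (1+t)^(2*n) := by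
        have hL0 : (0:ℝ) ≤ (1+t)^(2*n) := hpow.le
        exact mul_le_mul_of_nonneg_right hLle hL0
    _ = (1+t)^(2*n) * (‖Y.1‖ ^ 2 + (1 + t) * (‖Y.2‖ ^ 2 + ⟪A Y.1, Y.1⟫)) := by ring
    _ ≤ C * Stmt6.RHSsum A (W 0) n := hbound
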